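/- arXiv:2001.00625 — 2 statements merged into one kernel-verified Lean document; each statement's English description precedes it below -/
import Mathlib

section
/- Let n ≥ 2. For a signed partition I of [±n], let I₀ (the zero closure of I) denote the least B_n-partition K with I ≤ K. Then: (1) for all signed partitions I, J, one has (I ⊔ J)₀ = I₀ ·_B J₀, where ·_B is the product on P_n^B given by the least common coarsening within P_n^B; and (2) the congruence on SP_n generated by the set T of pairs (ε_{−i,i} ⊔ ε_{−j,j}, ε_{−i,i} ⊔ ε_{i,j}) for 1 ≤ i < j ≤ n equals {(I, J) ∈ SP_n × SP_n : I₀ = J₀}. -/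
instance setoidCommMonoid (α : Type*) : CommMonoid (Setoid α) where
  mul := (· ⊔ ·)
  one := ⊥
  mul_assoc := sup_assoc
  one_mul := bot_sup_eq
  mul_one := sup_bot_eq
  mul_comm := sup_comm

def muSet {α : Type*} (X : Set α) : Setoid α :=
  Relation.EqvGen.setoid (fun x y => x ∈ X ∧ y ∈ X)

def mu {α : Type*} (i j : α) : Setoid α := muSet {i, j}

/-- `[±n]`: nonzero integers of absolute value at most `n`, with the order from `ℤ`. -/
abbrev PM (n : ℕ) := {k : ℤ // k ≠ 0 ∧ |k| ≤ (n : ℤ)}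

namespace PM

/-- The negation involution `k ↦ -k` on `[±n]`. -/
def neg {n : ℕ} (x : PM n) : PM n :=
  ⟨-x.1, by obtain ⟨h1, h2⟩ := x.2; exact ⟨neg_ne_zero.mpr h1, by rwa [abs_neg]⟩⟩

@[simp] theorem neg_neg {n : ℕ} (x : PM n) : x.neg.neg = x := Subtype.ext (by simp [neg])

theorem neg_lt_neg {n : ℕ} {x y : PM n} (h : x < y) : y.neg < x.neg := by
  have h' : x.1 < y.1 := Subtype.coe_lt_coe.mpr h
  rw [← Subtype.coe_lt_coe]
  show -y.1 < -x.1
  omega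

theorem neg_lt_pos {n : ℕ} {x y : PM n} (hx : 0 < x.1) (hy : 0 < y.1) : x.neg < y := by
  rw [← Subtype.coe_lt_coe]
  show -x.1 < y.1
  omega

theorem pos_ne_neg {n : ℕ} {x y : PM n} (hx : 0 < x.1) (hy : 0 < y.1) : y ≠ x.neg := by
  intro h
  have : y.1 = -x.1 := congrArg Subtype.val h
  omega

theorem neg_lt_self {n : ℕ} {x : PM n} (hx : 0 < x.1) : x.neg < x := neg_lt_pos hx hx

/-- The absolute value map `x ↦ |x|` from `[±n]` to its positive part. -/
def abs {n : ℕ} (x : PM n) : PM n :=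
  ⟨|x.1|, by obtain ⟨h1, h2⟩ := x.2; exact ⟨abs_ne_zero.mpr h1, by rwa [abs_abs]⟩⟩

end PM

/-- Image of a subset of `[±n]` under negation. -/
def negSet {n : ℕ} (K : Set (PM n)) : Set (PM n) := PM.neg '' K

/-- The partition `I⁻` transported along negation: `x ∼ y` in `negPart I` iff `-x ∼ -y` in `I`. -/
def negPart {n : ℕ} (I : Setoid (PM n)) : Setoid (PM n) := Setoid.comap PM.neg I

/-- A set partition `I` of `[±n]` is *signed* if for every block `K` of `I` the set `-K` is
also a block; equivalently, `x ∼ y ↔ -x ∼ -y` for all `x, y`. -/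
def IsSigned {n : ℕ} (I : Setoid (PM n)) : Prop :=
  ∀ x y : PM n, I x y ↔ I (PM.neg x) (PM.neg y)

/-- A *zero block* of a partition `I` is a block `K` with `-K = K`. -/
def IsZeroBlock {n : ℕ} (I : Setoid (PM n)) (K : Set (PM n)) : Prop :=
  K ∈ I.classes ∧ negSet K = K

/-- A `Bₙ`-partition: a signed partition of `[±n]` with at most one zero block. -/
def IsBPart {n : ℕ} (I : Setoid (PM n)) : Prop :=
  IsSigned I ∧ Set.Subsingleton {K | IsZeroBlock I K}

/-- A *restricted* signed partition: all its zero blocks have more than two elements. -/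
def IsRestricted {n : ℕ} (I : Setoid (PM n)) : Prop :=
  IsSigned I ∧ ∀ K : Set (PM n), IsZeroBlock I K → 2 < K.ncard

/-- A `Dₙ`-partition: a `Bₙ`-partition whose zero block (if present) has more than two
elements. -/
def IsDPart {n : ℕ} (I : Setoid (PM n)) : Prop :=
  IsBPart I ∧ ∀ K : Set (PM n), IsZeroBlock I K → 2 < K.ncard

/-- For `i < j` in `[±n]`, the signed partition `ε_{i,j} = μ_{-j,-i} ⊔ μ_{i,j}`. -/
def eps {n : ℕ} (i j : PM n) : Setoid (PM n) := mu (PM.neg j) (PM.neg i) ⊔ mu i j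

theorem PM.neg_injective {n : ℕ} : Function.Injective (PM.neg : PM n → PM n) :=
  Function.LeftInverse.injective PM.neg_neg

theorem negPart_rel {n : ℕ} (I : Setoid (PM n)) (x y : PM n) :
    negPart I x y ↔ I (PM.neg x) (PM.neg y) := Iff.rfl

theorem negPart_mono {n : ℕ} {I J : Setoid (PM n)} (h : I ≤ J) : negPart I ≤ negPart J := by
  rw [Setoid.le_def] at h ⊢
  intro x y hxy
  exact h hxy

theorem negPart_negPart {n : ℕ} (I : Setoid (PM n)) : negPart (negPart I) = I := by
  apply Setoid.ext
  intro x y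
  show I (PM.neg (PM.neg x)) (PM.neg (PM.neg y)) ↔ I x y
  rw [PM.neg_neg, PM.neg_neg]

theorem negPart_sup {n : ℕ} (I J : Setoid (PM n)) :
    negPart (I ⊔ J) = negPart I ⊔ negPart J := by
  apply le_antisymm
  · have h1 : I ⊔ J ≤ negPart (negPart I ⊔ negPart J) := by
      have h2 : negPart (negPart I) ⊔ negPart (negPart J) ≤ negPart (negPart I ⊔ negPart J) :=
        sup_le (negPart_mono le_sup_left) (negPart_mono le_sup_right)
      simpa [negPart_negPart] using h2
    have h3 := negPart_mono h1
    simpa [negPart_negPart] using h3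
  · exact sup_le (negPart_mono le_sup_left) (negPart_mono le_sup_right)

theorem isSigned_iff_negPart_eq {n : ℕ} (I : Setoid (PM n)) :
    IsSigned I ↔ negPart I = I := by
  constructor
  · intro h
    apply Setoid.ext
    intro x y
    exact (h x y).symm
  · intro h x y
    have h' := Setoid.ext_iff.mp h x y
    exact h'.symm

/-- The submonoid `SPₙ` of signed partitions of `[±n]`. -/
def SPn (n : ℕ) : Submonoid (Setoid (PM n)) where
  carrier := {I | IsSigned I}
  one_mem' := by
    intro x y
    show (⊥ : Setoid (PM n)) x y ↔ (⊥ : Setoid (PM n)) (PM.neg x) (PM.neg y)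
    simp only [Setoid.bot_def]
    exact ⟨fun h => congrArg PM.neg h, fun h => PM.neg_injective h⟩
  mul_mem' := by
    intro a b ha hb
    replace ha : IsSigned a := ha
    replace hb : IsSigned b := hb
    show IsSigned (a ⊔ b)
    rw [isSigned_iff_negPart_eq] at ha hb ⊢
    rw [negPart_sup, ha, hb]

/-- The set `T` of pairs `(ε_{-i,i} ⊔ ε_{-j,j}, ε_{-i,i} ⊔ ε_{i,j})` for positive
`i < j`, viewed as a binary relation on the monoid `SPₙ` of signed partitions. -/
def TRelB (n : ℕ) : ↥(SPn n) → ↥(SPn n) → Prop := fun a b =>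
  ∃ i j : PM n, 0 < i.1 ∧ 0 < j.1 ∧ i < j ∧
    (a : Setoid (PM n)) = eps (PM.neg i) i ⊔ eps (PM.neg j) j ∧
    (b : Setoid (PM n)) = eps (PM.neg i) i ⊔ eps i j


section ZeroClosure

variable {n : ℕ}

instance : Finite (PM n) := by
  have hsub : {k : ℤ | k ≠ 0 ∧ |k| ≤ (n : ℤ)} ⊆ Set.Icc (-(n : ℤ)) n := by
    intro k hk
    rw [Set.mem_Icc]
    have := hk.2
    rw [abs_le] at this
    exact this
  exact ((Set.finite_Icc (-(n : ℤ)) n).subset hsub).to_subtype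

theorem muSet_rel {α : Type*} {X : Set α} {x y : α} (hx : x ∈ X) (hy : y ∈ X) :
    muSet X x y :=
  Relation.EqvGen.rel x y ⟨hx, hy⟩

theorem muSet_le {α : Type*} {X : Set α} {I : Setoid α} (h : ∀ x ∈ X, ∀ y ∈ X, I x y) :
    muSet X ≤ I :=
  Setoid.eqvGen_le fun x y hxy => h x hxy.1 y hxy.2

theorem muSet_rel_iff {α : Type*} {X : Set α} {x y : α} :
    muSet X x y ↔ x = y ∨ (x ∈ X ∧ y ∈ X) := by
  constructor
  · intro h
    have h' : Relation.EqvGen (fun a b => a ∈ X ∧ b ∈ X) x y := h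
    clear h
    induction h' with
    | rel _ _ h => exact Or.inr h
    | refl a => exact Or.inl rfl
    | symm a b _ ih =>
      rcases ih with h | h
      · exact Or.inl h.symm
      · exact Or.inr ⟨h.2, h.1⟩
    | trans a b c _ _ ih1 ih2 =>
      rcases ih1 with h | h
      · rwa [h]
      rcases ih2 with h2 | h2
      · rw [← h2]; exact Or.inr h
      · exact Or.inr ⟨h.1, h2.2⟩
  · rintro (rfl | h)
    · exact Relation.EqvGen.refl x
    · exact Relation.EqvGen.rel x y h

theorem mu_le {α : Type*} {I : Setoid α} {a b : α} (h : I a b) : mu a b ≤ I := by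
  apply muSet_le
  rintro x (rfl | rfl) y (rfl | rfl)
  · exact I.refl' _
  · exact h
  · exact I.symm' h
  · exact I.refl' _

theorem mu_rel_left {α : Type*} (a b : α) : mu a b a b :=
  muSet_rel (Set.mem_insert _ _) (Set.mem_insert_of_mem _ rfl)

theorem mu_comm {α : Type*} (a b : α) : mu a b = mu b a := by
  unfold mu
  rw [Set.pair_comm]

theorem mem_negSet {K : Set (PM n)} {x : PM n} : x ∈ negSet K ↔ x.neg ∈ K := by
  constructor
  · rintro ⟨w, hw, rfl⟩
    rwa [PM.neg_neg]
  · intro h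
    exact ⟨x.neg, h, PM.neg_neg x⟩

theorem neg_preimage_pair (a b : PM n) :
    PM.neg ⁻¹' ({a, b} : Set (PM n)) = {PM.neg a, PM.neg b} := by
  ext x
  simp only [Set.mem_preimage, Set.mem_insert_iff, Set.mem_singleton_iff]
  constructor
  · rintro (h | h)
    · left; rw [← h, PM.neg_neg]
    · right; rw [← h, PM.neg_neg]
  · rintro (rfl | rfl)
    · left; exact PM.neg_neg a
    · right; exact PM.neg_neg b

theorem negPart_muSet (X : Set (PM n)) : negPart (muSet X) = muSet (PM.neg ⁻¹' X) := by
  apply Setoid.ext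
  intro x y
  rw [negPart_rel, muSet_rel_iff, muSet_rel_iff, PM.neg_injective.eq_iff]
  exact Iff.rfl

theorem negPart_mu (a b : PM n) : negPart (mu a b) = mu a.neg b.neg := by
  unfold mu
  rw [negPart_muSet, neg_preimage_pair]

theorem isSigned_sup {I J : Setoid (PM n)} (hI : IsSigned I) (hJ : IsSigned J) :
    IsSigned (I ⊔ J) := by
  rw [isSigned_iff_negPart_eq] at hI hJ ⊢
  rw [negPart_sup, hI, hJ]

theorem isSigned_eps (i j : PM n) : IsSigned (eps i j) := by
  rw [isSigned_iff_negPart_eq]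
  unfold eps
  rw [negPart_sup, negPart_mu, negPart_mu, PM.neg_neg, PM.neg_neg]
  rw [mu_comm j i, mu_comm i.neg j.neg, sup_comm]

theorem eps_le {K : Setoid (PM n)} (hK : IsSigned K) {i j : PM n} (h : K i j) :
    eps i j ≤ K := by
  unfold eps
  exact sup_le (mu_le (K.symm' ((hK i j).mp h))) (mu_le h)

theorem eps_rel_self (i j : PM n) : eps i j i j := by
  have hle : mu i j ≤ eps i j := le_sup_right
  exact Setoid.le_def.mp hle (mu_rel_left i j)

theorem eps_negself (x : PM n) : eps x.neg x = mu x.neg x := by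
  unfold eps
  rw [PM.neg_neg, sup_idem]

/-- The zero closure of a partition: join all zero blocks into one. -/
def zeroCl (I : Setoid (PM n)) : Setoid (PM n) :=
  Relation.EqvGen.setoid (fun x y => I x y ∨ (I x x.neg ∧ I y y.neg))

theorem zeroCl_rel {I : Setoid (PM n)} (hI : IsSigned I) {x y : PM n} :
    zeroCl I x y ↔ I x y ∨ (I x x.neg ∧ I y y.neg) := by
  constructor
  · intro h
    have h' : Relation.EqvGen (fun x y : PM n => I x y ∨ (I x x.neg ∧ I y y.neg)) x y := h
    clear h
    induction h' with
    | rel _ _ h => exact h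
    | refl a => exact Or.inl (I.refl' a)
    | symm a b _ ih =>
      rcases ih with h | ⟨h1, h2⟩
      · exact Or.inl (I.symm' h)
      · exact Or.inr ⟨h2, h1⟩
    | trans a b c _ _ ih1 ih2 =>
      rcases ih1 with h1 | ⟨ha, hb⟩
      · rcases ih2 with h2 | ⟨hb', hc⟩
        · exact Or.inl (I.trans' h1 h2)
        · exact Or.inr ⟨I.trans' (I.trans' h1 hb') (I.symm' ((hI a b).mp h1)), hc⟩
      · rcases ih2 with h2 | ⟨hb', hc⟩
        · exact Or.inr ⟨ha, I.trans' (I.trans' (I.symm' h2) hb) ((hI b c).mp h2)⟩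
        · exact Or.inr ⟨ha, hc⟩
  · intro h
    exact Relation.EqvGen.rel x y h

theorem le_zeroCl (I : Setoid (PM n)) : I ≤ zeroCl I :=
  Setoid.le_def.mpr fun h => Relation.EqvGen.rel _ _ (Or.inl h)

theorem isSigned_zeroCl {I : Setoid (PM n)} (hI : IsSigned I) : IsSigned (zeroCl I) := by
  intro x y
  rw [zeroCl_rel hI, zeroCl_rel hI]
  constructor
  · rintro (h | ⟨hx, hy⟩)
    · exact Or.inl ((hI x y).mp h)
    · exact Or.inr ⟨(hI x x.neg).mp hx, (hI y y.neg).mp hy⟩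
  · rintro (h | ⟨hx, hy⟩)
    · exact Or.inl ((hI x y).mpr h)
    · exact Or.inr ⟨(hI x x.neg).mpr hx, (hI y y.neg).mpr hy⟩

theorem bpart_rel {K : Setoid (PM n)} (hK : IsBPart K) {x y : PM n}
    (hx : K x x.neg) (hy : K y y.neg) : K x y := by
  have hzb : ∀ z : PM n, K z z.neg → IsZeroBlock K {w | K w z} := by
    intro z hz
    refine ⟨K.mem_classes z, ?_⟩
    ext w
    rw [mem_negSet]
    show K w.neg z ↔ K w z
    constructor
    · intro h
      have h2 : K w z.neg := by
        have h3 := (hK.1 w.neg z).mp h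
        rwa [PM.neg_neg] at h3
      exact K.trans' h2 (K.symm' hz)
    · intro h
      have h2 : K w z.neg := K.trans' h hz
      have h3 := (hK.1 w z.neg).mp h2
      rwa [PM.neg_neg] at h3
  have heq := hK.2 (hzb x hx) (hzb y hy)
  have hx' : x ∈ {w | K w x} := K.refl' x
  rw [heq] at hx'
  exact hx'

theorem isBPart_zeroCl {I : Setoid (PM n)} (hI : IsSigned I) : IsBPart (zeroCl I) := by
  refine ⟨isSigned_zeroCl hI, ?_⟩
  intro A hA B hB
  obtain ⟨⟨a, rfl⟩, hAneg⟩ := hA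
  obtain ⟨⟨b, rfl⟩, hBneg⟩ := hB
  have key : ∀ c : PM n, negSet {x | zeroCl I x c} = {x | zeroCl I x c} →
      ∀ z : PM n, (zeroCl I z c ↔ I z z.neg) := by
    intro c hneg
    have hc : zeroCl I c.neg c := by
      have h1 : c.neg ∈ negSet {x | zeroCl I x c} := by
        rw [mem_negSet, PM.neg_neg]
        exact (zeroCl I).refl' c
      rw [hneg] at h1
      exact h1
    have hcz : I c c.neg := by
      rcases (zeroCl_rel hI).mp hc with h | ⟨_, h⟩
      · exact I.symm' h
      · exact h
    intro z
    rw [zeroCl_rel hI]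
    constructor
    · rintro (h | ⟨hz, _⟩)
      · exact I.trans' (I.trans' h hcz) (I.symm' ((hI z c).mp h))
      · exact hz
    · intro hz
      exact Or.inr ⟨hz, hcz⟩
  ext z
  exact ((key a hAneg z).trans (key b hBneg z).symm)

theorem zeroCl_least (I : Setoid (PM n)) (hI : IsSigned I) :
    IsLeast {K : Setoid (PM n) | IsBPart K ∧ I ≤ K} (zeroCl I) := by
  constructor
  · exact ⟨isBPart_zeroCl hI, le_zeroCl I⟩
  · rintro K ⟨hKB, hIK⟩
    rw [Setoid.le_def]
    intro x y hxy
    rcases (zeroCl_rel hI).mp hxy with h | ⟨hx, hy⟩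
    · exact Setoid.le_def.mp hIK h
    · exact bpart_rel hKB (Setoid.le_def.mp hIK hx) (Setoid.le_def.mp hIK hy)

theorem zeroCl_eq_of_le_iff {I J : Setoid (PM n)} (hI : IsSigned I) (hJ : IsSigned J)
    (h : ∀ K : Setoid (PM n), IsBPart K → (I ≤ K ↔ J ≤ K)) : zeroCl I = zeroCl J := by
  have hs : {K : Setoid (PM n) | IsBPart K ∧ I ≤ K} = {K | IsBPart K ∧ J ≤ K} := by
    ext K
    exact and_congr_right fun hK => h K hK
  exact (hs ▸ zeroCl_least I hI).unique (zeroCl_least J hJ)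

theorem zeroCl_sup_eq {I J I' J' : Setoid (PM n)} (hI : IsSigned I) (hJ : IsSigned J)
    (hI' : IsSigned I') (hJ' : IsSigned J')
    (h1 : zeroCl I = zeroCl I') (h2 : zeroCl J = zeroCl J') :
    zeroCl (I ⊔ J) = zeroCl (I' ⊔ J') := by
  apply zeroCl_eq_of_le_iff (isSigned_sup hI hJ) (isSigned_sup hI' hJ')
  intro K hK
  have e : ∀ (A : Setoid (PM n)), IsSigned A → (A ≤ K ↔ zeroCl A ≤ K) := fun A hA =>
    ⟨fun h => (zeroCl_least A hA).2 ⟨hK, h⟩, fun h => le_trans (le_zeroCl A) h⟩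
  rw [sup_le_iff, sup_le_iff, e I hI, e J hJ, e I' hI', e J' hJ', h1, h2]

theorem T_le_iff {K : Setoid (PM n)} (hK : IsBPart K) (i j : PM n) :
    (eps i.neg i ⊔ eps j.neg j ≤ K) ↔ (eps i.neg i ⊔ eps i j ≤ K) := by
  rw [eps_negself, eps_negself]
  constructor
  · intro h
    have hKi : K i.neg i := Setoid.le_def.mp (le_trans le_sup_left h) (mu_rel_left i.neg i)
    have hKj : K j.neg j := Setoid.le_def.mp (le_trans le_sup_right h) (mu_rel_left j.neg j)
    have hij : K i j := bpart_rel hK (K.symm' hKi) (K.symm' hKj)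
    exact sup_le (le_trans le_sup_left h) (eps_le hK.1 hij)
  · intro h
    have hKi : K i.neg i := Setoid.le_def.mp (le_trans le_sup_left h) (mu_rel_left i.neg i)
    have hKij : K i j := Setoid.le_def.mp (le_trans le_sup_right h) (eps_rel_self i j)
    have hKjj : K j j.neg := by
      have h1 : K i.neg j.neg := (hK.1 i j).mp hKij
      exact K.trans' (K.symm' hKij) (K.trans' (K.symm' hKi) h1)
    exact sup_le (le_trans le_sup_left h) (mu_le (K.symm' hKjj))

theorem conGen_forward {a b : ↥(SPn n)} (h : ConGen.Rel (TRelB n) a b) :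
    zeroCl (a : Setoid (PM n)) = zeroCl (b : Setoid (PM n)) := by
  induction h with
  | of x y hxy =>
    obtain ⟨i, j, hi, hj, hij, hx, hy⟩ := hxy
    rw [hx, hy]
    exact zeroCl_eq_of_le_iff
      (isSigned_sup (isSigned_eps _ _) (isSigned_eps _ _))
      (isSigned_sup (isSigned_eps _ _) (isSigned_eps _ _))
      (fun K hK => T_le_iff hK i j)
  | refl x => rfl
  | symm _ ih => exact ih.symm
  | trans _ _ ih1 ih2 => exact ih1.trans ih2
  | @mul w x y z h1 h2 ih1 ih2 =>
    show zeroCl ((w : Setoid (PM n)) ⊔ (y : Setoid (PM n)))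
        = zeroCl ((x : Setoid (PM n)) ⊔ (z : Setoid (PM n)))
    exact zeroCl_sup_eq w.2 y.2 x.2 z.2 ih1 ih2

theorem tmove {I : Setoid (PM n)} (hI : IsSigned I) {i j : PM n}
    (hi : 0 < i.1) (hj : 0 < j.1) (hij : i < j) (hzi : I i i.neg) (hzj : I j j.neg) :
    ConGen.Rel (TRelB n) ⟨I, hI⟩ ⟨I ⊔ eps i j, isSigned_sup hI (isSigned_eps i j)⟩ := by
  have hL : IsSigned (eps i.neg i ⊔ eps j.neg j) :=
    isSigned_sup (isSigned_eps _ _) (isSigned_eps _ _)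
  have hR : IsSigned (eps i.neg i ⊔ eps i j) :=
    isSigned_sup (isSigned_eps _ _) (isSigned_eps _ _)
  have hT : TRelB n ⟨eps i.neg i ⊔ eps j.neg j, hL⟩ ⟨eps i.neg i ⊔ eps i j, hR⟩ :=
    ⟨i, j, hi, hj, hij, rfl, rfl⟩
  have step := ConGen.Rel.mul (ConGen.Rel.refl (⟨I, hI⟩ : ↥(SPn n))) (ConGen.Rel.of _ _ hT)
  have e1 : (⟨I, hI⟩ * ⟨eps i.neg i ⊔ eps j.neg j, hL⟩ : ↥(SPn n)) = ⟨I, hI⟩ := by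
    apply Subtype.ext
    show I ⊔ (eps i.neg i ⊔ eps j.neg j) = I
    rw [eps_negself, eps_negself]
    exact sup_eq_left.mpr (sup_le (mu_le (I.symm' hzi)) (mu_le (I.symm' hzj)))
  have e2 : (⟨I, hI⟩ * ⟨eps i.neg i ⊔ eps i j, hR⟩ : ↥(SPn n))
      = (⟨I ⊔ eps i j, isSigned_sup hI (isSigned_eps i j)⟩ : ↥(SPn n)) := by
    apply Subtype.ext
    show I ⊔ (eps i.neg i ⊔ eps i j) = I ⊔ eps i j
    rw [eps_negself, ← sup_assoc, sup_eq_left.mpr (mu_le (I.symm' hzi))]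
  rw [e1, e2] at step
  exact step

/-- The set of "unresolved" pairs of zero elements. -/
def badSet (I : Setoid (PM n)) : Set (PM n × PM n) :=
  {p | I p.1 p.1.neg ∧ I p.2 p.2.neg ∧ ¬ I p.1 p.2}

theorem rel_zeroCl_of_empty {I : Setoid (PM n)} (hI : IsSigned I) (h : badSet I = ∅) :
    ConGen.Rel (TRelB n) ⟨I, hI⟩ ⟨zeroCl I, isSigned_zeroCl hI⟩ := by
  have hz : zeroCl I = I := by
    apply le_antisymm _ (le_zeroCl I)
    rw [Setoid.le_def]
    intro x y hxy
    rcases (zeroCl_rel hI).mp hxy with h' | ⟨hx, hy⟩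
    · exact h'
    · by_contra hc
      have hmem : (x, y) ∈ badSet I := ⟨hx, hy, hc⟩
      rw [h] at hmem
      exact hmem
  have e : (⟨zeroCl I, isSigned_zeroCl hI⟩ : ↥(SPn n)) = ⟨I, hI⟩ := Subtype.ext hz
  rw [e]
  exact ConGen.Rel.refl _

theorem rel_zeroCl_step {N : ℕ}
    (ih : ∀ (I : Setoid (PM n)) (hI : IsSigned I), (badSet I).ncard ≤ N →
      ConGen.Rel (TRelB n) ⟨I, hI⟩ ⟨zeroCl I, isSigned_zeroCl hI⟩)
    {I : Setoid (PM n)} (hI : IsSigned I) {i j : PM n}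
    (hi : 0 < i.1) (hj : 0 < j.1) (hij : i < j)
    (hzi : I i i.neg) (hzj : I j j.neg) (hnij : ¬ I i j)
    (hle : (badSet I).ncard ≤ N + 1) :
    ConGen.Rel (TRelB n) ⟨I, hI⟩ ⟨zeroCl I, isSigned_zeroCl hI⟩ := by
  set I' := I ⊔ eps i j with hI'def
  have hI' : IsSigned I' := isSigned_sup hI (isSigned_eps i j)
  have move := tmove hI hi hj hij hzi hzj
  have hI'le : I' ≤ zeroCl I :=
    sup_le (le_zeroCl I) (eps_le (isSigned_zeroCl hI) ((zeroCl_rel hI).mpr (Or.inr ⟨hzi, hzj⟩)))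
  have hsubset : badSet I' ⊆ badSet I := by
    rintro ⟨u, v⟩ ⟨hu, hv, huv⟩
    have hu' : I u u.neg := by
      have h1 := Setoid.le_def.mp hI'le hu
      rcases (zeroCl_rel hI).mp h1 with h | ⟨h, _⟩
      · exact h
      · exact h
    have hv' : I v v.neg := by
      have h1 := Setoid.le_def.mp hI'le hv
      rcases (zeroCl_rel hI).mp h1 with h | ⟨h, _⟩
      · exact h
      · exact h
    exact ⟨hu', hv', fun h => huv (Setoid.le_def.mp (le_sup_left : I ≤ I') h)⟩
  have hsub : badSet I' ⊂ badSet I := by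
    rw [Set.ssubset_iff_subset_ne]
    refine ⟨hsubset, fun he => ?_⟩
    have h1 : (i, j) ∈ badSet I := ⟨hzi, hzj, hnij⟩
    rw [← he] at h1
    exact h1.2.2 (Setoid.le_def.mp (le_sup_right : eps i j ≤ I') (eps_rel_self i j))
  have hcard : (badSet I').ncard ≤ N := by
    have h2 := Set.ncard_lt_ncard hsub (Set.toFinite _)
    omega
  have hzeq : zeroCl I' = zeroCl I := by
    apply zeroCl_eq_of_le_iff hI' hI
    intro K hK
    constructor
    · intro h
      exact le_trans le_sup_left h
    · intro h
      exact sup_le h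
        (eps_le hK.1 (bpart_rel hK (Setoid.le_def.mp h hzi) (Setoid.le_def.mp h hzj)))
  have tail := ih I' hI' hcard
  have esub : (⟨zeroCl I', isSigned_zeroCl hI'⟩ : ↥(SPn n))
      = ⟨zeroCl I, isSigned_zeroCl hI⟩ := Subtype.ext hzeq
  rw [esub] at tail
  exact ConGen.Rel.trans move tail

theorem rel_zeroCl_aux : ∀ (N : ℕ) (I : Setoid (PM n)) (hI : IsSigned I),
    (badSet I).ncard ≤ N →
    ConGen.Rel (TRelB n) ⟨I, hI⟩ ⟨zeroCl I, isSigned_zeroCl hI⟩ := by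
  intro N
  induction N with
  | zero =>
    intro I hI h0
    have hemp : badSet I = ∅ := (Set.ncard_eq_zero (Set.toFinite _)).mp (Nat.le_zero.mp h0)
    exact rel_zeroCl_of_empty hI hemp
  | succ N ih =>
    intro I hI hle
    by_cases hemp : badSet I = ∅
    · exact rel_zeroCl_of_empty hI hemp
    · obtain ⟨p, hp⟩ := Set.nonempty_iff_ne_empty.mpr hemp
      obtain ⟨x, y⟩ := p
      obtain ⟨hx, hy, hxy⟩ := hp
      have absrel : ∀ z : PM n, I z z.neg → I z z.abs := by
        intro z hz
        rcases lt_or_gt_of_ne z.2.1 with h | h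
        · have e : z.abs = z.neg := Subtype.ext (abs_of_neg h)
          rw [e]; exact hz
        · have e : z.abs = z := Subtype.ext (abs_of_pos h)
          rw [e]
      have hxa := absrel x hx
      have hya := absrel y hy
      have hxZ : I x.abs x.abs.neg :=
        I.trans' (I.trans' (I.symm' hxa) hx) ((hI x x.abs).mp hxa)
      have hyZ : I y.abs y.abs.neg :=
        I.trans' (I.trans' (I.symm' hya) hy) ((hI y y.abs).mp hya)
      have hnab : ¬ I x.abs y.abs := fun h => hxy (I.trans' (I.trans' hxa h) (I.symm' hya))
      have hposx : (0 : ℤ) < x.abs.1 := abs_pos.mpr x.2.1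
      have hposy : (0 : ℤ) < y.abs.1 := abs_pos.mpr y.2.1
      have hne : x.abs ≠ y.abs := fun h => hnab (h ▸ I.refl' x.abs)
      rcases lt_or_gt_of_ne hne with hlt | hlt
      · exact rel_zeroCl_step ih hI hposx hposy hlt hxZ hyZ hnab hle
      · exact rel_zeroCl_step ih hI hposy hposx hlt hyZ hxZ (fun h => hnab (I.symm' h)) hle

theorem rel_zeroCl (a : ↥(SPn n)) :
    ConGen.Rel (TRelB n) a ⟨zeroCl (a : Setoid (PM n)), isSigned_zeroCl a.2⟩ :=
  rel_zeroCl_aux (badSet (a : Setoid (PM n))).ncard (a : Setoid (PM n)) a.2 le_rfl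

end ZeroClosure

/-- Writing `I₀` for the zero closure of a signed partition `I`
(the least `Bₙ`-partition coarser than `I`):
(1) `(I ⊔ J)₀ = I₀ ·_B J₀` for all signed partitions `I, J`, where `·_B` is the least
common `Bₙ`-coarsening; and
(2) the congruence on `SPₙ` generated by `T` equals `{(I, J) : I₀ = J₀}`. -/
theorem zeroClosure_mul_and_conGen_T (n : ℕ) (hn : 2 ≤ n) :
    (∀ I J : Setoid (PM n), IsSigned I → IsSigned J →
      ∀ cI cJ cIJ : Setoid (PM n),
        IsLeast {K | IsBPart K ∧ I ≤ K} cI →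
        IsLeast {K | IsBPart K ∧ J ≤ K} cJ →
        IsLeast {K | IsBPart K ∧ I ⊔ J ≤ K} cIJ →
        IsLeast {K | IsBPart K ∧ cI ≤ K ∧ cJ ≤ K} cIJ) ∧
    ∀ a b : ↥(SPn n),
      conGen (TRelB n) a b ↔
        ∃ c : Setoid (PM n),
          IsLeast {K | IsBPart K ∧ (a : Setoid (PM n)) ≤ K} c ∧
          IsLeast {K | IsBPart K ∧ (b : Setoid (PM n)) ≤ K} c := by
  constructor
  · intro I J hI hJ cI cJ cIJ hcI hcJ hcIJ
    constructor
    · refine ⟨hcIJ.1.1, ?_, ?_⟩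
      · exact hcI.2 ⟨hcIJ.1.1, le_trans le_sup_left hcIJ.1.2⟩
      · exact hcJ.2 ⟨hcIJ.1.1, le_trans le_sup_right hcIJ.1.2⟩
    · rintro K ⟨hKB, hKI, hKJ⟩
      exact hcIJ.2 ⟨hKB, sup_le (le_trans hcI.1.2 hKI) (le_trans hcJ.1.2 hKJ)⟩
  · intro a b
    constructor
    · intro h
      have h' : ConGen.Rel (TRelB n) a b := h
      have key := conGen_forward h'
      refine ⟨zeroCl (a : Setoid (PM n)), zeroCl_least _ a.2, ?_⟩
      rw [key]
      exact zeroCl_least _ b.2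
    · rintro ⟨c, hca, hcb⟩
      have ea : c = zeroCl (a : Setoid (PM n)) := hca.unique (zeroCl_least _ a.2)
      have eb : c = zeroCl (b : Setoid (PM n)) := hcb.unique (zeroCl_least _ b.2)
      show ConGen.Rel (TRelB n) a b
      have ra := rel_zeroCl a
      have rb := rel_zeroCl b
      have e : (⟨zeroCl (a : Setoid (PM n)), isSigned_zeroCl a.2⟩ : ↥(SPn n))
          = ⟨zeroCl (b : Setoid (PM n)), isSigned_zeroCl b.2⟩ :=
        Subtype.ext (ea.symm.trans eb)
      exact ConGen.Rel.trans ra (e ▸ ConGen.Rel.symm rb)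
end

section
/- Let n ≥ 2. The monoid RSP_n of restricted signed partitions of [±n] is presented by generators e_{i,j} for i < j in [±n] with j ≠ −i, subject to the relations (RSP1) e_{i,j}·e_{i,j} = e_{i,j}; (RSP2) e_{i,j}·e_{r,s} = e_{r,s}·e_{i,j} for all admissible i < j and r < s; (RSP3) e_{i,j}·e_{j,k} = e_{i,j}·e_{i,k} = e_{i,k}·e_{j,k} for all i < j < k in [±n] with j ≠ −i and k ≠ −j; (RSP4) e_{i,j} = e_{−j,−i} for all admissible i < j; i.e. there is a monoid isomorphism from this presented monoid to RSP_n sending e_{i,j} to ε_{i,j}. -/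
theorem PM.neg_ne_neg_neg {n : ℕ} {i j : PM n} (hji : j ≠ PM.neg i) :
    PM.neg i ≠ PM.neg (PM.neg j) := by
  intro h
  apply hji
  rw [PM.neg_injective h, PM.neg_neg]

/-- Generators `e_{i,j}` for `i < j` in `[±n]` with `j ≠ -i`. -/
abbrev RGen (n : ℕ) := {p : PM n × PM n // p.1 < p.2 ∧ p.2 ≠ PM.neg p.1}

open FreeMonoid in
/-- The defining relations (RSP1)–(RSP4) of the monoid `RSPₙ`. -/
inductive RSRel (n : ℕ) : FreeMonoid (RGen n) → FreeMonoid (RGen n) → Prop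
  /-- (RSP1) `e_{i,j} e_{i,j} = e_{i,j}`. -/
  | RSP1 (a : RGen n) : RSRel n (of a * of a) (of a)
  /-- (RSP2) `e_{i,j} e_{r,s} = e_{r,s} e_{i,j}`. -/
  | RSP2 (a b : RGen n) : RSRel n (of a * of b) (of b * of a)
  /-- (RSP3), first equality: `e_{i,j} e_{j,k} = e_{i,j} e_{i,k}` for `i < j < k`,
  `j ≠ -i`, `k ≠ -j` (and `k ≠ -i`, so that `e_{i,k}` is a generator). -/
  | RSP3a (i j k : PM n) (hij : i < j) (hjk : j < k)
      (hji : j ≠ PM.neg i) (hkj : k ≠ PM.neg j) (hki : k ≠ PM.neg i) :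
      RSRel n (of ⟨(i, j), hij, hji⟩ * of ⟨(j, k), hjk, hkj⟩)
        (of ⟨(i, j), hij, hji⟩ * of ⟨(i, k), hij.trans hjk, hki⟩)
  /-- (RSP3), second equality: `e_{i,j} e_{j,k} = e_{i,k} e_{j,k}` for `i < j < k`,
  `j ≠ -i`, `k ≠ -j` (and `k ≠ -i`). -/
  | RSP3b (i j k : PM n) (hij : i < j) (hjk : j < k)
      (hji : j ≠ PM.neg i) (hkj : k ≠ PM.neg j) (hki : k ≠ PM.neg i) :
      RSRel n (of ⟨(i, j), hij, hji⟩ * of ⟨(j, k), hjk, hkj⟩)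
        (of ⟨(i, k), hij.trans hjk, hki⟩ * of ⟨(j, k), hjk, hkj⟩)
  /-- (RSP4) `e_{i,j} = e_{-j,-i}`. -/
  | RSP4 (i j : PM n) (hij : i < j) (hji : j ≠ PM.neg i) :
      RSRel n (of ⟨(i, j), hij, hji⟩)
        (of ⟨(PM.neg j, PM.neg i), PM.neg_lt_neg hij, PM.neg_ne_neg_neg hji⟩)

namespace RSPAux
variable {n : ℕ}

theorem neg_ne_self (x : PM n) : x.neg ≠ x := by
  intro h
  have : -x.1 = x.1 := congrArg Subtype.val h
  have := x.2.1
  omega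

theorem ne_neg_symm {x y : PM n} (h : y ≠ x.neg) : x ≠ y.neg := by
  intro h'
  exact h (by rw [h', PM.neg_neg])

theorem neg_ne_neg {x y : PM n} (h : x ≠ y) : x.neg ≠ y.neg :=
  fun h' => h (PM.neg_injective h')

instance : Finite (PM n) := by
  have : Finite (Set.Icc (-(n:ℤ)) (n:ℤ)) := (Set.finite_Icc _ _).to_subtype
  apply Finite.of_injective (fun x : PM n => (⟨x.1, by
    obtain ⟨h1, h2⟩ := x.2
    rw [Set.mem_Icc]
    constructor <;> [skip; skip] <;> cases abs_le.mp h2 <;> omega⟩ : Set.Icc (-(n:ℤ)) (n:ℤ)))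
  intro a b h
  simpa [Subtype.ext_iff] using h

/-! ### Setoid basics -/

theorem rel_mono {α : Type*} {I J : Setoid α} (h : I ≤ J) {x y : α} (hxy : I x y) : J x y :=
  Setoid.le_def.mp h hxy

theorem bot_rel_iff {α : Type*} {x y : α} : (⊥ : Setoid α) x y ↔ x = y := by
  rw [show ((⊥ : Setoid α) x y) = ((x = y)) from congrFun (congrFun Setoid.bot_def x) y]

theorem mu_rel_left {α : Type*} (i j : α) : (mu i j) i j :=
  Relation.EqvGen.rel i j ⟨by simp, by simp⟩

theorem mu_le_iff {α : Type*} {i j : α} {S : Setoid α} : mu i j ≤ S ↔ S i j := by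
  constructor
  · intro h; exact rel_mono h (mu_rel_left i j)
  · intro h
    apply Setoid.eqvGen_le
    rintro x y ⟨hx, hy⟩
    simp only [Set.mem_insert_iff, Set.mem_singleton_iff] at hx hy
    rcases hx with rfl | rfl <;> rcases hy with rfl | rfl
    · exact S.refl _
    · exact h
    · exact S.symm h
    · exact S.refl _

theorem mu_rel_iff {α : Type*} {i j x y : α} :
    (mu i j) x y ↔ x = y ∨ (x ∈ ({i, j} : Set α) ∧ y ∈ ({i, j} : Set α)) := by
  constructor
  · intro h
    induction h with
    | rel a b h => exact Or.inr h
    | refl a => exact Or.inl rfl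
    | symm a b _ ih => rcases ih with rfl | ⟨h1, h2⟩; exacts [Or.inl rfl, Or.inr ⟨h2, h1⟩]
    | trans a b c _ _ ih1 ih2 =>
      rcases ih1 with rfl | ⟨h1, h2⟩
      · exact ih2
      · rcases ih2 with rfl | ⟨h3, h4⟩
        · exact Or.inr ⟨h1, h2⟩
        · exact Or.inr ⟨h1, h4⟩
  · rintro (rfl | ⟨h1, h2⟩)
    · exact (mu i j).refl _
    · exact Relation.EqvGen.rel x y ⟨h1, h2⟩

theorem mu_comm {α : Type*} (i j : α) : mu i j = mu j i := by
  unfold mu; rw [Set.pair_comm]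


/-! ### eps lemmas -/

theorem eps_rel_pair (i j : PM n) : eps i j i j :=
  rel_mono le_sup_right (mu_rel_left i j)

theorem eps_rel_negpair (i j : PM n) : eps i j i.neg j.neg :=
  (eps i j).symm (rel_mono le_sup_left (mu_rel_left j.neg i.neg))

theorem eps_le_iff {i j : PM n} {S : Setoid (PM n)} :
    eps i j ≤ S ↔ S j.neg i.neg ∧ S i j := by
  unfold eps
  rw [sup_le_iff, mu_le_iff, mu_le_iff]

theorem eps_comm (i j : PM n) : eps i j = eps j i := by
  unfold eps
  rw [mu_comm j i, mu_comm i.neg j.neg, sup_comm]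

theorem eps_neg (i j : PM n) : eps i j = eps j.neg i.neg := by
  unfold eps
  simp only [PM.neg_neg]
  rw [sup_comm]

theorem epsL (a b c : PM n) : eps a b ⊔ eps b c = eps a b ⊔ eps a c := by
  have key : ∀ x y : PM n, (eps a x ⊔ eps a y) x y ∧ (eps a x ⊔ eps a y) x.neg y.neg := by
    intro x y
    set S := eps a x ⊔ eps a y with hS
    have h1 : S a x := rel_mono le_sup_left (eps_rel_pair a x)
    have h2 : S a y := rel_mono le_sup_right (eps_rel_pair a y)
    have h3 : S a.neg x.neg := rel_mono le_sup_left (eps_rel_negpair a x)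
    have h4 : S a.neg y.neg := rel_mono le_sup_right (eps_rel_negpair a y)
    exact ⟨S.trans (S.symm h1) h2, S.trans (S.symm h3) h4⟩
  apply le_antisymm
  · refine sup_le le_sup_left ?_
    rw [eps_le_iff]
    refine ⟨?_, (key b c).1⟩
    exact (eps a b ⊔ eps a c).symm (key b c).2
  · refine sup_le le_sup_left ?_
    rw [eps_le_iff]
    have h1 : (eps a b ⊔ eps b c) a b := rel_mono le_sup_left (eps_rel_pair a b)
    have h2 : (eps a b ⊔ eps b c) b c := rel_mono le_sup_right (eps_rel_pair b c)
    have h3 : (eps a b ⊔ eps b c) a.neg b.neg := rel_mono le_sup_left (eps_rel_negpair a b)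
    have h4 : (eps a b ⊔ eps b c) b.neg c.neg := rel_mono le_sup_right (eps_rel_negpair b c)
    set S := eps a b ⊔ eps b c
    exact ⟨S.symm (S.trans h3 h4), S.trans h1 h2⟩

/-! ### signedness -/

theorem negPart_rel {I : Setoid (PM n)} {x y : PM n} : negPart I x y ↔ I x.neg y.neg :=
  Iff.rfl

theorem negPart_mono {I J : Setoid (PM n)} (h : I ≤ J) : negPart I ≤ negPart J :=
  Setoid.le_def.mpr fun hxy => rel_mono h hxy

theorem negPart_negPart (I : Setoid (PM n)) : negPart (negPart I) = I :=
  Setoid.ext fun a b => by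
    rw [negPart_rel, negPart_rel, PM.neg_neg, PM.neg_neg]

theorem negPart_sup (I J : Setoid (PM n)) :
    negPart (I ⊔ J) = negPart I ⊔ negPart J := by
  apply le_antisymm
  · have h1 := negPart_mono (le_sup_left : negPart I ≤ negPart I ⊔ negPart J)
    have h2 := negPart_mono (le_sup_right : negPart J ≤ negPart I ⊔ negPart J)
    rw [negPart_negPart] at h1 h2
    have := negPart_mono (sup_le h1 h2)
    rwa [negPart_negPart] at this
  · exact sup_le (negPart_mono le_sup_left) (negPart_mono le_sup_right)

theorem negPart_mu (i j : PM n) : negPart (mu i j) = mu i.neg j.neg := by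
  apply le_antisymm
  · rw [Setoid.le_def]
    intro x y h
    rw [negPart_rel, mu_rel_iff] at h
    rcases h with h | ⟨hx, hy⟩
    · exact (PM.neg_injective h) ▸ (mu i.neg j.neg).refl x
    · apply Relation.EqvGen.rel
      constructor
      · simp only [Set.mem_insert_iff, Set.mem_singleton_iff] at hx ⊢
        rcases hx with h | h
        · exact Or.inl (by rw [← h, PM.neg_neg])
        · exact Or.inr (by rw [← h, PM.neg_neg])
      · simp only [Set.mem_insert_iff, Set.mem_singleton_iff] at hy ⊢
        rcases hy with h | h
        · exact Or.inl (by rw [← h, PM.neg_neg])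
        · exact Or.inr (by rw [← h, PM.neg_neg])
  · rw [mu_le_iff, negPart_rel, PM.neg_neg, PM.neg_neg]
    exact mu_rel_left i j

theorem isSigned_iff {I : Setoid (PM n)} : IsSigned I ↔ negPart I = I := by
  constructor
  · intro h
    exact Setoid.ext fun x y => ((h x y).symm)
  · intro h x y
    constructor
    · intro hxy
      rw [← h] at hxy
      exact hxy
    · intro hxy
      have : negPart I x y := hxy
      rw [h] at this
      exact this

theorem signed_bot : IsSigned (⊥ : Setoid (PM n)) := by
  intro x y
  rw [bot_rel_iff, bot_rel_iff]
  exact ⟨fun h => by rw [h], fun h => PM.neg_injective h⟩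

theorem signed_sup {I J : Setoid (PM n)} (hI : IsSigned I) (hJ : IsSigned J) :
    IsSigned (I ⊔ J) := by
  rw [isSigned_iff] at *
  rw [negPart_sup, hI, hJ]

theorem signed_eps (i j : PM n) : IsSigned (eps i j) := by
  rw [isSigned_iff]
  unfold eps
  rw [negPart_sup, negPart_mu, negPart_mu]
  simp only [PM.neg_neg]
  rw [mu_comm j i, mu_comm i.neg j.neg, sup_comm]



/-! ### The presented monoid -/

abbrev Pn (n : ℕ) := PresentedMonoid (RSRel n)

/-- generator as element of the presented monoid -/
def og (a : RGen n) : Pn n := PresentedMonoid.of (RSRel n) a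

theorem rel_eq {w1 w2 : FreeMonoid (RGen n)} (h : RSRel n w1 w2) :
    PresentedMonoid.mk (RSRel n) w1 = PresentedMonoid.mk (RSRel n) w2 :=
  Quot.sound (ConGen.Rel.of _ _ h)

theorem mk_of (a : RGen n) : PresentedMonoid.mk (RSRel n) (FreeMonoid.of a) = og a := rfl

theorem og_comm (a b : RGen n) : og a * og b = og b * og a := by
  rw [← mk_of, ← mk_of, ← map_mul, ← map_mul]
  exact rel_eq (RSRel.RSP2 a b)

theorem og_idem (a : RGen n) : og a * og a = og a := by
  rw [← mk_of, ← map_mul]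
  exact rel_eq (RSRel.RSP1 a)

theorem og_comm_all (a : RGen n) (x : Pn n) : og a * x = x * og a := by
  induction x using PresentedMonoid.inductionOn with
  | _ w =>
    induction w using FreeMonoid.recOn with
    | one => rw [map_one, one_mul, mul_one]
    | of_mul b xs ih =>
      rw [map_mul, mk_of, ← mul_assoc, og_comm a b, mul_assoc, ih, ← mul_assoc]

theorem mul_comm_all (x y : Pn n) : x * y = y * x := by
  induction x using PresentedMonoid.inductionOn with
  | _ w =>
    induction w using FreeMonoid.recOn with
    | one => rw [map_one, one_mul, mul_one]
    | of_mul b xs ih =>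
      rw [map_mul, mk_of, mul_assoc, ih, ← mul_assoc, og_comm_all b y, mul_assoc]

/-- product of generators over a list -/
def piL (L : List (RGen n)) : Pn n := (L.map og).prod

theorem piL_nil : piL (n := n) [] = 1 := rfl

theorem piL_cons (a : RGen n) (L : List (RGen n)) : piL (a :: L) = og a * piL L := by
  simp [piL]

theorem exists_piL (x : Pn n) : ∃ L, x = piL L := by
  induction x using PresentedMonoid.inductionOn with
  | _ w =>
    induction w using FreeMonoid.recOn with
    | one => exact ⟨[], map_one _⟩
    | of_mul b xs ih =>
      obtain ⟨L, hL⟩ := ih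
      exact ⟨b :: L, by rw [map_mul, mk_of, hL, piL_cons]⟩

theorem absorb_mem {L : List (RGen n)} {a : RGen n} (h : a ∈ L) :
    piL L * og a = piL L := by
  induction L with
  | nil => simp at h
  | cons b t ih =>
    rw [piL_cons, mul_assoc]
    rcases List.mem_cons.mp h with rfl | h
    · rw [← og_comm_all, ← mul_assoc, og_idem]
    · rw [ih h]

theorem absorb_list {x : Pn n} {L : List (RGen n)} (h : ∀ a ∈ L, x * og a = x) :
    x * piL L = x := by
  induction L with
  | nil => rw [piL_nil, mul_one]
  | cons b t ih =>
    rw [piL_cons, ← mul_assoc, h b (List.mem_cons_self)]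
    exact ih fun a ha => h a (List.mem_cons_of_mem _ ha)

/-! ### the element `EE u v` -/

/-- `EE u v` is the generator with (unordered) pair `{u, v}`, or `1` if the pair is invalid. -/
noncomputable def EE (u v : PM n) : Pn n :=
  if h : u < v ∧ v ≠ u.neg then og ⟨(u, v), h⟩
  else if h' : v < u ∧ u ≠ v.neg then og ⟨(v, u), h'⟩
  else 1

theorem EE_of {u v : PM n} (h1 : u < v) (h2 : v ≠ u.neg) :
    EE u v = og ⟨(u, v), h1, h2⟩ := by
  unfold EE
  rw [dif_pos ⟨h1, h2⟩]

theorem EE_of' {u v : PM n} (h1 : v < u) (h2 : u ≠ v.neg) :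
    EE u v = og ⟨(v, u), h1, h2⟩ := by
  unfold EE
  rw [dif_neg (by rintro ⟨h, -⟩; exact absurd h1 (lt_asymm h)), dif_pos ⟨h1, h2⟩]

theorem EE_self (u : PM n) : EE u u = 1 := by
  unfold EE
  rw [dif_neg (by rintro ⟨h, -⟩; exact lt_irrefl _ h), dif_neg (by rintro ⟨h, -⟩; exact lt_irrefl _ h)]

theorem EE_invalid {u v : PM n} (h : v = u.neg) : EE u v = 1 := by
  unfold EE
  rw [dif_neg (by rintro ⟨-, h2⟩; exact h2 h), dif_neg (by rintro ⟨-, h2⟩; exact h2 (by rw [h, PM.neg_neg]))]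

theorem EE_comm (u v : PM n) : EE u v = EE v u := by
  by_cases hv : v = u.neg
  · rw [EE_invalid hv, EE_invalid (by rw [hv, PM.neg_neg])]
  · rcases lt_trichotomy u v with h | rfl | h
    · rw [EE_of h hv, EE_of' h hv]
    · rfl
    · rw [EE_of' h (ne_neg_symm hv), EE_of h (ne_neg_symm hv)]

theorem EE_neg (u v : PM n) : EE u v = EE u.neg v.neg := by
  by_cases hv : v = u.neg
  · rw [EE_invalid hv, EE_invalid (by rw [hv])]
  · rcases lt_trichotomy u v with h | rfl | h
    · rw [EE_of h hv, EE_of' (PM.neg_lt_neg h) (by rw [PM.neg_neg]; exact fun h' => hv (by rw [← h'])), ← mk_of, ← mk_of]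
      exact rel_eq (RSRel.RSP4 u v h hv)
    · rw [EE_self, EE_self]
    · rw [EE_of' h (ne_neg_symm hv), EE_of (PM.neg_lt_neg h) (by rw [PM.neg_neg]; exact fun h' => hv (by rw [← h', PM.neg_neg])), ← mk_of, ← mk_of]
      exact rel_eq (RSRel.RSP4 v u h (ne_neg_symm hv))



/-! ### the homomorphism -/

theorem smul_def (I J : Setoid (PM n)) : I * J = I ⊔ J := rfl

def fgen : RGen n → Setoid (PM n) := fun a => eps a.1.1 a.1.2

theorem fgen_resp : ∀ w1 w2 : FreeMonoid (RGen n), RSRel n w1 w2 →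
    FreeMonoid.lift (fgen (n := n)) w1 = FreeMonoid.lift fgen w2 := by
  intro w1 w2 h
  cases h with
  | RSP1 a =>
    simp only [map_mul, FreeMonoid.lift_eval_of]
    rw [smul_def]
    exact sup_idem _
  | RSP2 a b =>
    simp only [map_mul, FreeMonoid.lift_eval_of]
    rw [smul_def, smul_def]
    exact sup_comm _ _
  | RSP3a i j k hij hjk hji hkj hki =>
    simp only [map_mul, FreeMonoid.lift_eval_of]
    rw [smul_def, smul_def]
    exact epsL i j k
  | RSP3b i j k hij hjk hji hkj hki =>
    simp only [map_mul, FreeMonoid.lift_eval_of]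
    rw [smul_def, smul_def]
    calc eps i j ⊔ eps j k = eps i j ⊔ eps i k := epsL i j k
      _ = eps k i ⊔ eps i j := by rw [sup_comm, eps_comm i k]
      _ = eps k i ⊔ eps k j := epsL k i j
      _ = eps i k ⊔ eps j k := by rw [eps_comm k i, eps_comm k j]
  | RSP4 i j hij hji =>
    simp only [FreeMonoid.lift_eval_of]
    exact eps_neg i j

def phi : Pn n →* Setoid (PM n) := PresentedMonoid.lift fgen fgen_resp

theorem phi_og (a : RGen n) : phi (og a) = eps a.1.1 a.1.2 := rfl

/-! ### the partition of a list of generators -/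

def PhiL (L : List (RGen n)) : Setoid (PM n) := phi (piL L)

theorem PhiL_nil : PhiL (n := n) [] = ⊥ := map_one phi

theorem PhiL_cons (a : RGen n) (L : List (RGen n)) :
    PhiL (a :: L) = eps a.1.1 a.1.2 ⊔ PhiL L := by
  unfold PhiL
  rw [piL_cons, map_mul, phi_og]
  rfl

def RL (L : List (RGen n)) (u v : PM n) : Prop :=
  ∃ a ∈ L, (u = a.1.1 ∧ v = a.1.2) ∨ (u = a.1.1.neg ∧ v = a.1.2.neg)

theorem PhiL_eqvGen (L : List (RGen n)) : PhiL L = Relation.EqvGen.setoid (RL L) := by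
  induction L with
  | nil =>
    rw [PhiL_nil]
    refine le_antisymm bot_le (Setoid.eqvGen_le ?_)
    rintro x y ⟨a, ha, -⟩
    simp at ha
  | cons a L ih =>
    rw [PhiL_cons, ih]
    apply le_antisymm
    · apply sup_le
      · rw [eps_le_iff]
        have h1 : Relation.EqvGen.setoid (RL (a :: L)) a.1.1 a.1.2 :=
          Relation.EqvGen.rel _ _ ⟨a, List.mem_cons_self, Or.inl ⟨rfl, rfl⟩⟩
        have h2 : Relation.EqvGen.setoid (RL (a :: L)) a.1.1.neg a.1.2.neg :=
          Relation.EqvGen.rel _ _ ⟨a, List.mem_cons_self, Or.inr ⟨rfl, rfl⟩⟩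
        exact ⟨(Relation.EqvGen.setoid (RL (a :: L))).symm h2, h1⟩
      · apply Setoid.eqvGen_le
        rintro x y ⟨b, hb, h⟩
        exact Relation.EqvGen.rel _ _ ⟨b, List.mem_cons_of_mem _ hb, h⟩
    · apply Setoid.eqvGen_le
      rintro x y ⟨b, hb, h⟩
      rcases List.mem_cons.mp hb with rfl | hb
      · rcases h with ⟨rfl, rfl⟩ | ⟨rfl, rfl⟩
        · exact rel_mono le_sup_left (eps_rel_pair _ _)
        · exact rel_mono le_sup_left (eps_rel_negpair _ _)
      · exact rel_mono le_sup_right (Relation.EqvGen.rel _ _ ⟨b, hb, h⟩)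

/-! ### absorption -/

def absE (x : Pn n) (u v : PM n) : Prop := x * EE u v = x

theorem absE_refl (x : Pn n) (u : PM n) : absE x u u := by
  unfold absE
  rw [EE_self, mul_one]

theorem absE_symm {x : Pn n} {u v : PM n} (h : absE x u v) : absE x v u := by
  unfold absE at *
  rwa [← EE_comm]

theorem absE_neg {x : Pn n} {u v : PM n} (h : absE x u v) : absE x u.neg v.neg := by
  unfold absE at *
  rwa [← EE_neg]

theorem EE_gen (a : RGen n) : EE a.1.1 a.1.2 = og a := by
  rw [EE_of a.2.1 a.2.2]

theorem EE_sorted_a {x y z : PM n} (hxy : x < y) (hyz : y < z)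
    (h1 : y ≠ x.neg) (h2 : z ≠ y.neg) (h3 : z ≠ x.neg) :
    EE x y * EE y z = EE x y * EE x z := by
  rw [EE_of hxy h1, EE_of hyz h2, EE_of (hxy.trans hyz) h3, ← mk_of, ← mk_of, ← mk_of,
    ← map_mul, ← map_mul]
  exact rel_eq (RSRel.RSP3a x y z hxy hyz h1 h2 h3)

theorem EE_sorted_b {x y z : PM n} (hxy : x < y) (hyz : y < z)
    (h1 : y ≠ x.neg) (h2 : z ≠ y.neg) (h3 : z ≠ x.neg) :
    EE x y * EE y z = EE x z * EE y z := by
  rw [EE_of hxy h1, EE_of hyz h2, EE_of (hxy.trans hyz) h3, ← mk_of, ← mk_of, ← mk_of,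
    ← map_mul, ← map_mul]
  exact rel_eq (RSRel.RSP3b x y z hxy hyz h1 h2 h3)

theorem EE_tri {a b c : PM n} (hab : a ≠ b) (hab' : b ≠ a.neg) (hbc : b ≠ c)
    (hbc' : c ≠ b.neg) (hac : a ≠ c) (hac' : c ≠ a.neg) :
    EE a b * EE b c = EE a b * EE a c := by
  rcases hab.lt_or_gt with h1 | h1 <;> rcases hbc.lt_or_gt with h2 | h2 <;>
    rcases hac.lt_or_gt with h3 | h3
  · exact EE_sorted_a h1 h2 hab' hbc' hac'
  · exact absurd (h1.trans h2) (lt_asymm h3)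
  · -- a < b, c < b, a < c : sorted (a, c, b)
    have A1 := EE_sorted_a h3 h2 hac' (ne_neg_symm hbc') hab'
    have A2 := EE_sorted_b h3 h2 hac' (ne_neg_symm hbc') hab'
    rw [EE_comm b c, ← A2, A1]
    exact mul_comm_all _ _
  · -- a < b, c < b, c < a : sorted (c, a, b)
    have A2 := EE_sorted_b h3 h1 (ne_neg_symm hac') hab' (ne_neg_symm hbc')
    rw [EE_comm b c, EE_comm a c, mul_comm_all (EE a b) (EE c b), ← A2]
    exact mul_comm_all _ _
  · -- b < a, b < c, a < c : sorted (b, a, c)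
    have A1 := EE_sorted_a h1 h3 (ne_neg_symm hab') hac' hbc'
    rw [EE_comm a b]
    exact A1.symm
  · -- b < a, b < c, c < a : sorted (b, c, a)
    have A1 := EE_sorted_a h2 h3 hbc' (ne_neg_symm hac') (ne_neg_symm hab')
    have A2 := EE_sorted_b h2 h3 hbc' (ne_neg_symm hac') (ne_neg_symm hab')
    rw [EE_comm a b, EE_comm a c, mul_comm_all (EE b a) (EE b c), ← A1, A2]
  · exact absurd (h2.trans h1) (lt_asymm h3)
  · -- b < a, c < b, c < a : sorted (c, b, a)
    have A2 := EE_sorted_b h2 h1 (ne_neg_symm hbc') (ne_neg_symm hab') (ne_neg_symm hac')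
    rw [EE_comm a b, EE_comm b c, EE_comm a c, mul_comm_all (EE b a) (EE c b), A2]
    exact mul_comm_all _ _

theorem EE_tri2 {a b c : PM n} (hab : a ≠ b) (hab' : b ≠ a.neg) (hbc : b ≠ c)
    (hbc' : c ≠ b.neg) (hac : a ≠ c) (hac' : c ≠ a.neg) :
    EE a b * EE b c = EE a c * EE b c := by
  have h := EE_tri hbc.symm (ne_neg_symm hbc') hab.symm (ne_neg_symm hab') hac.symm
    (ne_neg_symm hac')
  rw [EE_comm c b, EE_comm b a, EE_comm c a] at h
  calc EE a b * EE b c = EE b c * EE a b := mul_comm_all _ _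
    _ = EE b c * EE a c := h
    _ = EE a c * EE b c := mul_comm_all _ _

theorem absE_trans {x : Pn n} {a b c : PM n} (hab : a ≠ b) (hab' : b ≠ a.neg) (hbc : b ≠ c)
    (hbc' : c ≠ b.neg) (hac : a ≠ c) (hac' : c ≠ a.neg)
    (h1 : absE x a b) (h2 : absE x b c) : absE x a c := by
  unfold absE at *
  calc x * EE a c = x * EE b c * EE a c := by rw [h2]
    _ = x * (EE b c * EE a c) := mul_assoc _ _ _
    _ = x * (EE a b * EE b c) := by
        rw [mul_comm_all (EE b c) (EE a c), ← EE_tri2 hab hab' hbc hbc' hac hac']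
    _ = x * EE a b * EE b c := (mul_assoc _ _ _).symm
    _ = x * EE b c := by rw [h1]
    _ = x := h2



/-! ### the invariant Q -/

def Q (x : Pn n) (u v : PM n) : Prop :=
  (v ≠ u.neg ∧ absE x u v) ∨ (v = u.neg ∧ ∃ t, t ≠ u ∧ t ≠ v ∧ absE x u t ∧ absE x t v)

theorem Q_refl (x : Pn n) (u : PM n) : Q x u u :=
  Or.inl ⟨(neg_ne_self u).symm, absE_refl x u⟩

theorem Q_symm {x : Pn n} {u v : PM n} (h : Q x u v) : Q x v u := by
  rcases h with ⟨h1, h2⟩ | ⟨h1, t, ht1, ht2, h2, h3⟩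
  · exact Or.inl ⟨ne_neg_symm h1, absE_symm h2⟩
  · subst h1
    exact Or.inr ⟨(PM.neg_neg u).symm, t, ht2, ht1, absE_symm h3, absE_symm h2⟩

theorem Q_trans {x : Pn n} {u v w : PM n} (h1 : Q x u v) (h2 : Q x v w) : Q x u w := by
  rcases h1 with ⟨hv, habuv⟩ | ⟨hv, t, ht1, ht2, hut, htv⟩
  · rcases h2 with ⟨hw, habvw⟩ | ⟨hw, s, hs1, hs2, hvs, hsw⟩
    · -- A-A
      by_cases hwu : w = u
      · subst hwu; exact Q_refl x w
      by_cases hwnu : w = u.neg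
      · refine Or.inr ⟨hwnu, v, ?_, ?_, habuv, habvw⟩
        · intro h; apply hw; rw [hwnu, h]
        · intro h; rw [← h] at hwnu; exact hv hwnu
      · refine Or.inl ⟨hwnu, ?_⟩
        by_cases huv : u = v
        · rw [huv]; exact habvw
        by_cases hvw : v = w
        · rw [← hvw]; exact habuv
        · exact absE_trans huv hv hvw hw (fun h => hwu h.symm) hwnu habuv habvw
    · -- A-B
      subst hw
      by_cases huv : u = v
      · subst huv
        exact Or.inr ⟨rfl, s, fun h => hs1 h, hs2, hvs, hsw⟩
      by_cases hvnu : v.neg = u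
      · rw [← hvnu] at huv ⊢
        exact Q_refl x v.neg
      · refine Or.inl ⟨fun h => huv (PM.neg_injective h).symm, ?_⟩
        by_cases hsu : s = u
        · rw [← hsu]; exact hsw
        by_cases hsu' : s = u.neg
        · have h' := absE_neg (hsu' ▸ hvs)
          rw [PM.neg_neg] at h'
          exact absE_symm h'
        · have hstep : absE x u s :=
            absE_trans huv hv (Ne.symm hs1) hs2 (fun h => hsu h.symm) hsu' habuv hvs
          exact absE_trans (fun h => hsu h.symm) hsu' hs2 (neg_ne_neg (Ne.symm hs1))
            (fun h => hvnu h.symm) (fun h => huv (PM.neg_injective h).symm) hstep hsw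
  · rcases h2 with ⟨hw, habvw⟩ | ⟨hw, s, hs1, hs2, hvs, hsw⟩
    · -- B-A
      subst hv
      have hwu : w ≠ u := by simpa using hw
      by_cases hwnu : w = u.neg
      · subst hwnu
        exact Or.inr ⟨rfl, t, ht1, ht2, hut, htv⟩
      · refine Or.inl ⟨hwnu, ?_⟩
        by_cases htw : t = w
        · rw [← htw]; exact hut
        by_cases htw' : t = w.neg
        · have h' := absE_neg (htw' ▸ htv)
          rw [PM.neg_neg, PM.neg_neg] at h'
          exact absE_symm h'
        · have hwt : w ≠ t.neg := ne_neg_symm htw'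
          have hstep : absE x t w :=
            absE_trans ht2 (neg_ne_neg (Ne.symm ht1)) (Ne.symm hwnu) hw htw hwt htv habvw
          exact absE_trans (Ne.symm ht1) ht2 htw hwt (Ne.symm hwu) hwnu hut hstep
    · -- B-B
      subst hv
      subst hw
      rw [PM.neg_neg]
      exact Q_refl x u

theorem Q_of_eqvGen {x : Pn n} {R : PM n → PM n → Prop} (hR : ∀ u v, R u v → Q x u v)
    {r s : PM n} (h : Relation.EqvGen R r s) : Q x r s := by
  induction h with
  | rel a b h => exact hR a b h
  | refl a => exact Q_refl x a
  | symm a b _ ih => exact Q_symm ih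
  | trans a b c _ _ ih1 ih2 => exact Q_trans ih1 ih2

theorem Q_rel {L : List (RGen n)} {r s : PM n} (h : PhiL L r s) : Q (piL L) r s := by
  rw [PhiL_eqvGen] at h
  refine Q_of_eqvGen ?_ h
  rintro u v ⟨a, ha, ⟨rfl, rfl⟩ | ⟨rfl, rfl⟩⟩
  · refine Or.inl ⟨a.2.2, ?_⟩
    unfold absE
    rw [EE_gen]
    exact absorb_mem ha
  · refine Or.inl ⟨?_, ?_⟩
    · rw [PM.neg_neg]
      exact fun h' => a.2.2 (by rw [← h', PM.neg_neg])
    · unfold absE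
      rw [← EE_neg, EE_gen]
      exact absorb_mem ha



/-! ### consequences of absorption -/

theorem absE_to_rel {L : List (RGen n)} {u v : PM n} (huv : u ≠ v) (hvnu : v ≠ u.neg)
    (h : absE (piL L) u v) : PhiL L u v := by
  have h' := congrArg phi h
  rw [map_mul] at h'
  rcases huv.lt_or_gt with hlt | hlt
  · rw [EE_of hlt hvnu, phi_og, smul_def] at h'
    exact rel_mono (sup_eq_left.mp h') (eps_rel_pair u v)
  · rw [EE_of' hlt (ne_neg_symm hvnu), phi_og, smul_def] at h'
    exact (PhiL L).symm (rel_mono (sup_eq_left.mp h') (eps_rel_pair v u))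

theorem absorb_of_rel {L : List (RGen n)} {a : RGen n} (h : PhiL L a.1.1 a.1.2) :
    piL L * og a = piL L := by
  rcases Q_rel h with ⟨-, habs⟩ | ⟨hc, -⟩
  · rw [← EE_gen]
    exact habs
  · exact absurd hc a.2.2

/-! ### the image is restricted -/

theorem signed_PhiL (L : List (RGen n)) : IsSigned (PhiL L) := by
  induction L with
  | nil => rw [PhiL_nil]; exact signed_bot
  | cons a L ih => rw [PhiL_cons]; exact signed_sup (signed_eps _ _) ih

theorem restricted_PhiL (L : List (RGen n)) : IsRestricted (PhiL L) := by
  refine ⟨signed_PhiL L, ?_⟩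
  rintro K ⟨hK, hnegK⟩
  obtain ⟨y, rfl⟩ := hK
  have hy : y ∈ {x | PhiL L x y} := (PhiL L).refl y
  have hyneg : y.neg ∈ {x | PhiL L x y} := by
    rw [← hnegK]
    exact Set.mem_image_of_mem _ hy
  have hQ := Q_rel (hyneg : PhiL L y.neg y)
  rcases hQ with ⟨h1, -⟩ | ⟨-, t, ht1, ht2, h2, -⟩
  · exact absurd (PM.neg_neg y).symm h1
  · have hrel : PhiL L y.neg t := absE_to_rel (Ne.symm ht1) (by rwa [PM.neg_neg]) h2
    have htK : t ∈ {x | PhiL L x y} :=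
      (PhiL L).trans ((PhiL L).symm hrel) (hyneg : PhiL L y.neg y)
    have hsub : ({y, y.neg, t} : Set (PM n)) ⊆ {x | PhiL L x y} := by
      rintro z (rfl | rfl | rfl)
      exacts [hy, hyneg, htK]
    have h3 : ({y, y.neg, t} : Set (PM n)).ncard = 3 :=
      Set.ncard_eq_three.mpr ⟨y, y.neg, t, (neg_ne_self y).symm, Ne.symm ht2, Ne.symm ht1, rfl⟩
    have := Set.ncard_le_ncard hsub (Set.toFinite _)
    omega

/-! ### the canonical list -/

noncomputable def canL (I : Setoid (PM n)) : List (RGen n) :=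
  (Set.toFinite {a : RGen n | eps a.1.1 a.1.2 ≤ I}).toFinset.toList

theorem mem_canL {I : Setoid (PM n)} {a : RGen n} :
    a ∈ canL I ↔ eps a.1.1 a.1.2 ≤ I := by
  unfold canL
  rw [Finset.mem_toList, Set.Finite.mem_toFinset]
  rfl

theorem PhiL_le {L : List (RGen n)} {I : Setoid (PM n)}
    (h : ∀ a ∈ L, eps a.1.1 a.1.2 ≤ I) : PhiL L ≤ I := by
  induction L with
  | nil => rw [PhiL_nil]; exact bot_le
  | cons a L ih =>
    rw [PhiL_cons]
    exact sup_le (h a (List.mem_cons_self)) (ih fun b hb => h b (List.mem_cons_of_mem _ hb))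

theorem eps_mem_le {L : List (RGen n)} {a : RGen n} (h : a ∈ L) :
    eps a.1.1 a.1.2 ≤ PhiL L := by
  induction L with
  | nil => simp at h
  | cons b L ih =>
    rw [PhiL_cons]
    rcases List.mem_cons.mp h with rfl | h
    · exact le_sup_left
    · exact (ih h).trans le_sup_right

theorem canL_rel {I : Setoid (PM n)} (hres : IsRestricted I) {u v : PM n}
    (huv : u ≠ v) (hvnu : v ≠ u.neg) (h : I u v) : PhiL (canL I) u v := by
  rcases huv.lt_or_gt with hlt | hlt
  · have hg : eps u v ≤ I := eps_le_iff.mpr ⟨(hres.1 v u).mp (I.symm h), h⟩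
    have hmem : (⟨(u, v), hlt, hvnu⟩ : RGen n) ∈ canL I := mem_canL.mpr hg
    exact rel_mono (eps_mem_le hmem) (eps_rel_pair u v)
  · have hg : eps v u ≤ I := eps_le_iff.mpr ⟨(hres.1 u v).mp h, I.symm h⟩
    have hmem : (⟨(v, u), hlt, ne_neg_symm hvnu⟩ : RGen n) ∈ canL I := mem_canL.mpr hg
    exact (PhiL (canL I)).symm (rel_mono (eps_mem_le hmem) (eps_rel_pair v u))

theorem canL_eq {I : Setoid (PM n)} (hres : IsRestricted I) : PhiL (canL I) = I := by
  apply le_antisymm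
  · exact PhiL_le fun a ha => mem_canL.mp ha
  · rw [Setoid.le_def]
    intro x y hxy
    by_cases hxy' : x = y
    · exact hxy' ▸ (PhiL (canL I)).refl x
    by_cases hy : y = x.neg
    · subst hy
      have hzb : IsZeroBlock I {z | I z x} := by
        refine ⟨⟨x, rfl⟩, ?_⟩
        ext z
        constructor
        · rintro ⟨w, hw, rfl⟩
          exact I.trans ((hres.1 w x).mp hw) (I.symm hxy)
        · intro hz
          refine ⟨z.neg, ?_, PM.neg_neg z⟩
          exact I.trans ((hres.1 z x).mp hz) (I.symm hxy)
      have h3 := hres.2 _ hzb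
      have hex : ∃ t, t ∈ {z | I z x} ∧ t ≠ x ∧ t ≠ x.neg := by
        by_contra hcon
        push_neg at hcon
        have hsub : {z | I z x} ⊆ ({x, x.neg} : Set (PM n)) := by
          intro z hz
          rcases eq_or_ne z x with rfl | hzx
          · exact Set.mem_insert _ _
          · rcases eq_or_ne z x.neg with rfl | hzx'
            · exact Set.mem_insert_of_mem _ rfl
            · exact absurd hzx' (by simpa [hzx] using hcon z hz)
        have hle := Set.ncard_le_ncard hsub (Set.toFinite _)
        have : ({x, x.neg} : Set (PM n)).ncard ≤ 2 := by
          refine le_trans (Set.ncard_insert_le _ _) ?_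
          rw [Set.ncard_singleton]
        omega
      obtain ⟨t, ht, htx, htxn⟩ := hex
      have r1 : PhiL (canL I) x t := canL_rel hres (Ne.symm htx) htxn (I.symm ht)
      have r2 : PhiL (canL I) t x.neg :=
        canL_rel hres htxn (neg_ne_neg (Ne.symm htx)) (I.trans ht hxy)
      exact (PhiL (canL I)).trans r1 r2
    · exact canL_rel hres hxy' hy hxy

theorem main_eq (L : List (RGen n)) : piL L = piL (canL (PhiL L)) := by
  have hI : PhiL (canL (PhiL L)) = PhiL L := canL_eq (restricted_PhiL L)
  have h1 : piL L * piL (canL (PhiL L)) = piL L := by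
    apply absorb_list
    intro b hb
    apply absorb_of_rel
    exact rel_mono (mem_canL.mp hb) (eps_rel_pair b.1.1 b.1.2)
  have h2 : piL (canL (PhiL L)) * piL L = piL (canL (PhiL L)) := by
    apply absorb_list
    intro a ha
    apply absorb_of_rel
    rw [hI]
    exact rel_mono (eps_mem_le ha) (eps_rel_pair a.1.1 a.1.2)
  calc piL L = piL L * piL (canL (PhiL L)) := h1.symm
    _ = piL (canL (PhiL L)) * piL L := mul_comm_all _ _
    _ = piL (canL (PhiL L)) := h2


end RSPAux
/-- The monoid `RSPₙ` of restricted signed partitions of `[±n]` is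
presented by the generators `e_{i,j}` (for `i < j` in `[±n]` with `j ≠ -i`) subject to
relations (RSP1)–(RSP4): there is an injective monoid homomorphism from the presented
monoid into the partition monoid of `[±n]`, sending `e_{i,j}` to `ε_{i,j}`, whose range
is exactly the set of restricted signed partitions. -/
theorem presentedMonoid_isomorphic_RSPn (n : ℕ) (hn : 2 ≤ n) :
    ∃ φ : PresentedMonoid (RSRel n) →* Setoid (PM n),
      Function.Injective φ ∧
      Set.range φ = {I | IsRestricted I} ∧
      ∀ a : RGen n, φ (PresentedMonoid.of (RSRel n) a) = eps a.1.1 a.1.2 := by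
  refine ⟨RSPAux.phi, ?_, ?_, fun a => rfl⟩
  · intro x y h
    obtain ⟨L, rfl⟩ := RSPAux.exists_piL x
    obtain ⟨L', rfl⟩ := RSPAux.exists_piL y
    rw [RSPAux.main_eq L, RSPAux.main_eq L']
    have hLL : RSPAux.PhiL L = RSPAux.PhiL L' := h
    rw [hLL]
  · ext I
    simp only [Set.mem_range, Set.mem_setOf_eq]
    constructor
    · rintro ⟨x, rfl⟩
      obtain ⟨L, rfl⟩ := RSPAux.exists_piL x
      exact RSPAux.restricted_PhiL L
    · intro hres
      exact ⟨RSPAux.piL (RSPAux.canL I), RSPAux.canL_eq hres⟩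
end
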